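/- Let L be a Dedekind complete unital f-algebra, X a directed partially ordered L-module with the Riesz Decomposition Property, Y a Dedekind complete L-vector lattice which is sequentially P-Archimedean, and S : X → Y an order-bounded L-module homomorphism. Then S has a supremum S⁺ = S ∨ 0 in the partially ordered L-module of order-bounded operators from X to Y, and for every x ∈ X⁺, S⁺(x) = sup{S(y) : 0 ≤ y ≤ x}. -/

import Mathlib

/-- A Dedekind complete unital `f`-algebra over the reals. -/
class DFAlgebra (L : Type*) extends CommRing L, Lattice L, Algebra ℝ L where
  add_le_add_left : ∀ a b : L, a ≤ b → ∀ c : L, c + a ≤ c + b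
  mul_nonneg : ∀ a b : L, 0 ≤ a → 0 ≤ b → 0 ≤ a * b
  f_prop : ∀ a b c : L, a ⊓ b = 0 → 0 ≤ c → (c * a) ⊓ b = 0
  algebraMap_nonneg : ∀ r : ℝ, 0 ≤ r → 0 ≤ algebraMap r
  dedekind : ∀ S : Set L, S.Nonempty → BddAbove S → ∃ a : L, IsLUB S a


open Pointwise

instance (L : Type*) [DFAlgebra L] : AddLeftMono L :=
  ⟨fun c a b h => DFAlgebra.add_le_add_left a b h c⟩

section Gen
variable {G : Type*} [Lattice G] [AddCommGroup G] [AddLeftMono G]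

lemma gen_inf_add_le {x a b : G} (hx : 0 ≤ x) (ha : 0 ≤ a) (hb : 0 ≤ b) :
    x ⊓ (a + b) ≤ x ⊓ a + x ⊓ b := by
  rw [← sub_le_iff_le_add, sub_eq_add_neg, neg_inf, add_sup]
  apply sup_le
  · calc x ⊓ (a+b) + -x ≤ x + -x := add_le_add_left inf_le_left _
       _ = 0 := by abel
       _ ≤ x ⊓ a := le_inf hx ha
  · apply le_inf
    · calc x ⊓ (a+b) + -b ≤ x + -b := add_le_add_left inf_le_left _
        _ ≤ x + 0 := add_le_add_right (by simpa using hb) x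
        _ = x := add_zero x
    · calc x ⊓ (a+b) + -b ≤ (a+b) + -b := add_le_add_left inf_le_right _
        _ = a := by abel

lemma gen_disjoint_nsmul {x a : G} (hx : 0 ≤ x) (ha : 0 ≤ a) (h : x ⊓ a = 0) :
    ∀ n : ℕ, x ⊓ (n • a) = 0 := by
  intro n
  induction n with
  | zero => simpa using le_antisymm inf_le_right (le_inf hx le_rfl)
  | succ n ih =>
      have h1 : x ⊓ ((n+1) • a) ≤ x ⊓ (n • a) + x ⊓ a := by
        rw [succ_nsmul]
        exact gen_inf_add_le hx (nsmul_nonneg ha n) ha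
      rw [ih, h, add_zero] at h1
      exact le_antisymm h1 (le_inf hx (nsmul_nonneg ha (n+1)))

lemma gen_isLUB_inf {s : Set G} {A : G} (h : IsLUB s A) (x : G) :
    IsLUB ((fun t => x ⊓ t) '' s) (x ⊓ A) := by
  constructor
  · rintro _ ⟨t, ht, rfl⟩
    exact inf_le_inf_left x (h.1 ht)
  · intro u hu
    have key : ∀ t ∈ s, t ≤ x ⊔ A + u - x := by
      intro t ht
      have h1 : x ⊓ t + (x ⊔ t) = x + t := inf_add_sup x t
      have h2 : x ⊓ t ≤ u := hu ⟨t, ht, rfl⟩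
      have h3 : x ⊔ t ≤ x ⊔ A := sup_le_sup_left (h.1 ht) x
      have ht' : t = x ⊓ t + (x ⊔ t) - x := by rw [h1]; abel
      rw [ht']
      calc x ⊓ t + (x ⊔ t) - x ≤ u + (x ⊔ A) - x := by
            apply sub_le_sub_right; exact add_le_add h2 h3
        _ = x ⊔ A + u - x := by abel
    have hA : A ≤ x ⊔ A + u - x := h.2 key
    have h4 : x ⊓ A + (x ⊔ A) = x + A := inf_add_sup x A
    have h5 : x ⊓ A = x + A - (x ⊔ A) := by rw [← h4]; abel
    rw [h5]
    calc x + A - (x ⊔ A) ≤ x + (x ⊔ A + u - x) - (x ⊔ A) := by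
          apply sub_le_sub_right; exact add_le_add_right hA x
      _ = u := by abel

lemma gen_isLUB_add {s t : Set G} {A B : G} (ht : t.Nonempty)
    (hA : IsLUB s A) (hB : IsLUB t B) : IsLUB (s + t) (A + B) := by
  constructor
  · rintro _ ⟨a, ha, b, hb, rfl⟩
    exact add_le_add (hA.1 ha) (hB.1 hb)
  · intro u hu
    have h1 : ∀ b ∈ t, A ≤ u - b := by
      intro b hb
      apply hA.2
      intro a ha
      rw [le_sub_iff_add_le]
      exact hu ⟨a, ha, b, hb, rfl⟩
    have h2 : ∀ b ∈ t, b ≤ u - A := by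
      intro b hb
      have h3 := h1 b hb
      rw [le_sub_iff_add_le] at h3 ⊢
      rw [add_comm]
      exact h3
    have h4 := hB.2 h2
    rw [le_sub_iff_add_le, add_comm] at h4
    exact h4

lemma gen_nsmul_nonneg_cancel {a : G} {n : ℕ} (hn : 0 < n) (h : 0 ≤ n • a) : 0 ≤ a := by
  have hd : a⁺ ⊓ a⁻ = 0 := posPart_inf_negPart_eq_zero a
  have h1 : a⁺ ⊓ (n • a⁻) = 0 := gen_disjoint_nsmul (posPart_nonneg a) (negPart_nonneg a) hd n
  have h2 : (n • a⁻) ⊓ (n • a⁺) = 0 := by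
    rw [inf_comm] at h1
    exact gen_disjoint_nsmul (nsmul_nonneg (negPart_nonneg a) n) (posPart_nonneg a) h1 n
  have hsub : n • a = n • a⁺ - n • a⁻ := by
    rw [← smul_sub, posPart_sub_negPart]
  have hVU : n • a⁻ ≤ n • a⁺ := by
    rw [hsub] at h; exact sub_nonneg.mp h
  have hV : n • a⁻ = 0 := by
    refine le_antisymm ?_ (nsmul_nonneg (negPart_nonneg a) n)
    calc n • a⁻ ≤ n • a⁻ ⊓ n • a⁺ := le_inf le_rfl hVU
      _ = 0 := h2
  have ha : a⁻ ≤ n • a⁻ := by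
    calc a⁻ = 1 • a⁻ := (one_nsmul _).symm
      _ ≤ n • a⁻ := nsmul_le_nsmul_left (negPart_nonneg a) hn
  rw [hV] at ha
  have : a⁻ = 0 := le_antisymm ha (negPart_nonneg a)
  have := posPart_sub_negPart a
  rw [‹a⁻ = 0›, sub_zero] at this
  rw [← this]
  exact posPart_nonneg a

end Gen

section Lalg
variable {L : Type*} [DFAlgebra L]

lemma L_mul_nonneg {a b : L} (ha : 0 ≤ a) (hb : 0 ≤ b) : 0 ≤ a * b :=
  DFAlgebra.mul_nonneg a b ha hb

lemma L_mul_le_mul {a b c : L} (h : a ≤ b) (hc : 0 ≤ c) : c * a ≤ c * b := by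
  have h1 : 0 ≤ c * (b - a) := L_mul_nonneg hc (sub_nonneg.2 h)
  rw [mul_sub] at h1
  exact sub_nonneg.mp h1

lemma L_mul_nonpos {a b : L} (ha : 0 ≤ a) (hb : b ≤ 0) : a * b ≤ 0 := by
  have := L_mul_le_mul hb ha
  rwa [mul_zero] at this

lemma L_arch {a b : L} (h : ∀ n : ℕ, n • a ≤ b) : a ≤ 0 := by
  obtain ⟨u, hu⟩ := DFAlgebra.dedekind (Set.range fun n : ℕ => n • a)
    ⟨0 • a, ⟨0, rfl⟩⟩ ⟨b, by rintro _ ⟨n, rfl⟩; exact h n⟩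
  have h2 : u ≤ u - a := by
    apply hu.2
    rintro _ ⟨n, rfl⟩
    rw [le_sub_iff_add_le]
    have : n • a + a = (n + 1) • a := by rw [succ_nsmul]
    rw [this]
    exact hu.1 ⟨n + 1, rfl⟩
  rw [le_sub_iff_add_le] at h2
  exact (add_le_iff_nonpos_right u).mp h2

lemma L_disjoint_mul_zero {a b : L} (ha : 0 ≤ a) (hb : 0 ≤ b) (h : a ⊓ b = 0) :
    a * b = 0 := by
  have h1 : (b * a) ⊓ b = 0 := DFAlgebra.f_prop a b b h hb
  rw [inf_comm] at h1
  have h2 := DFAlgebra.f_prop b (b * a) a h1 ha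
  rw [mul_comm b a, inf_idem] at h2
  exact h2


lemma L_sq_nonneg (a : L) : 0 ≤ a * a := by
  have hd := posPart_inf_negPart_eq_zero a
  have hz : a⁺ * a⁻ = 0 := L_disjoint_mul_zero (posPart_nonneg a) (negPart_nonneg a) hd
  have h1 : a = a⁺ - a⁻ := (posPart_sub_negPart a).symm
  have h2 : a * a = a⁺ * a⁺ + a⁻ * a⁻ := by
    conv_lhs => rw [h1]
    have expand : (a⁺ - a⁻) * (a⁺ - a⁻) = a⁺ * a⁺ + a⁻ * a⁻ - 2 * (a⁺ * a⁻) := by ring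
    rw [expand, hz, mul_zero, sub_zero]
  rw [h2]
  exact add_nonneg (L_mul_nonneg (posPart_nonneg a) (posPart_nonneg a))
    (L_mul_nonneg (negPart_nonneg a) (negPart_nonneg a))

lemma L_one_nonneg : (0 : L) ≤ 1 := by simpa using L_sq_nonneg (1 : L)

lemma L_no_nilpotent {t : L} (ht : 0 ≤ t) (h : t * t = 0) : t = 0 := by
  set c := t ⊓ 1 with hc
  have hc0 : 0 ≤ c := le_inf ht L_one_nonneg
  have hc1 : c ≤ 1 := inf_le_right
  have hcsq : c * c = 0 := by
    have h1 : c * c ≤ t * t := le_trans (L_mul_le_mul inf_le_left hc0)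
      (by rw [mul_comm c t, mul_comm t t]; exact L_mul_le_mul inf_le_left ht)
    exact le_antisymm (h ▸ h1) (L_sq_nonneg c)
  have key : ∀ n : ℕ, n • c ≤ 1 := by
    intro n
    induction n with
    | zero => simpa using L_one_nonneg
    | succ n ih =>
        have h2 : c * (1 - n • c) = c := by
          have h5 : c * (n • c) = n • (c * c) := mul_smul_comm n c c
          rw [mul_sub, mul_one, h5, hcsq, smul_zero, sub_zero]
        have h3 : c ≤ 1 - n • c := by
          calc c = c * (1 - n • c) := h2.symm
            _ ≤ 1 * (1 - n • c) := by
                rw [mul_comm c _, mul_comm 1 _]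
                exact L_mul_le_mul hc1 (sub_nonneg.2 ih)
            _ = 1 - n • c := one_mul _
        rw [succ_nsmul]
        calc n • c + c ≤ n • c + (1 - n • c) := add_le_add_right h3 _
          _ = 1 := by abel
  have hle := L_arch key
  have hceq : c = 0 := le_antisymm hle hc0
  have h4 := DFAlgebra.f_prop 1 t t (by rw [inf_comm]; exact hceq) ht
  rw [mul_one, inf_idem] at h4
  exact h4

lemma L_mul_zero_disjoint {a b : L} (ha : 0 ≤ a) (hb : 0 ≤ b) (h : a * b = 0) :
    a ⊓ b = 0 := by
  have ht : 0 ≤ a ⊓ b := le_inf ha hb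
  apply L_no_nilpotent ht
  apply le_antisymm _ (L_sq_nonneg _)
  calc (a ⊓ b) * (a ⊓ b) ≤ a * (a ⊓ b) := by
        rw [mul_comm _ (a⊓b), mul_comm a (a⊓b)]; exact L_mul_le_mul inf_le_left ht
    _ ≤ a * b := L_mul_le_mul inf_le_right ha
    _ = 0 := h

lemma L_sum_nonneg {s : Finset ℕ} {f : ℕ → L} (h : ∀ k ∈ s, 0 ≤ f k) :
    0 ≤ ∑ k ∈ s, f k :=
  Finset.sum_induction f (fun a => 0 ≤ a) (fun _ _ => add_nonneg) le_rfl h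

lemma L_idem_nonneg {p : L} (h : p * p = p) : 0 ≤ p := h ▸ L_sq_nonneg p

lemma L_idem_le_one {p : L} (h : p * p = p) : p ≤ 1 := by
  have h1 : (1 - p) * (1 - p) = 1 - p := by
    have : (1 - p) * (1 - p) = 1 - 2 * p + p * p := by ring
    rw [this, h]; ring
  exact sub_nonneg.mp (L_idem_nonneg h1)

lemma L_idem_mul_of_le {p q : L} (hp : p * p = p) (hq : q * q = q) (hpq : p ≤ q) :
    p * q = p := by
  have hd : q ⊓ (1 - q) = 0 := by
    apply L_mul_zero_disjoint (L_idem_nonneg hq) (sub_nonneg.2 (L_idem_le_one hq))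
    rw [mul_sub, mul_one, hq, sub_self]
  have hd2 : p ⊓ (1 - q) = 0 := by
    apply le_antisymm _ (le_inf (L_idem_nonneg hp) (sub_nonneg.2 (L_idem_le_one hq)))
    calc p ⊓ (1 - q) ≤ q ⊓ (1 - q) := inf_le_inf_right _ hpq
      _ = 0 := hd
  have h3 := L_disjoint_mul_zero (L_idem_nonneg hp) (sub_nonneg.2 (L_idem_le_one hq)) hd2
  rw [mul_sub, mul_one, sub_eq_zero] at h3
  exact h3.symm

lemma L_algebraMap_mono {r s : ℝ} (h : r ≤ s) :
    algebraMap ℝ L r ≤ algebraMap ℝ L s := by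
  have h1 := DFAlgebra.algebraMap_nonneg (L := L) (s - r) (by linarith)
  rw [map_sub] at h1
  exact sub_nonneg.mp h1

end Lalg

section Lcomp
variable {L : Type*} [DFAlgebra L]

noncomputable def Lcomp (a : L) : L :=
  (DFAlgebra.dedekind (Set.range fun n : ℕ => 1 ⊓ n • a)
    ⟨_, ⟨0, rfl⟩⟩ ⟨1, by rintro _ ⟨n, rfl⟩; exact inf_le_left⟩).choose

lemma Lcomp_isLUB (a : L) : IsLUB (Set.range fun n : ℕ => 1 ⊓ n • a) (Lcomp a) :=
  (DFAlgebra.dedekind (Set.range fun n : ℕ => 1 ⊓ n • a)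
    ⟨_, ⟨0, rfl⟩⟩ ⟨1, by rintro _ ⟨n, rfl⟩; exact inf_le_left⟩).choose_spec

lemma Lcomp_nonneg (a : L) : 0 ≤ Lcomp a := by
  have h := (Lcomp_isLUB a).1 ⟨0, rfl⟩
  simpa [inf_eq_right.2 (L_one_nonneg (L := L))] using h

lemma Lcomp_le_one (a : L) : Lcomp a ≤ 1 :=
  (Lcomp_isLUB a).2 (by rintro _ ⟨n, rfl⟩; exact inf_le_left)

lemma Lcomp_disj {a x : L} (ha : 0 ≤ a) (hx : 0 ≤ x) (h : x ⊓ a = 0) :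
    x ⊓ Lcomp a = 0 := by
  have h1 := gen_isLUB_inf (Lcomp_isLUB a) x
  apply le_antisymm _ (le_inf hx (Lcomp_nonneg a))
  apply h1.2
  rintro _ ⟨_, ⟨n, rfl⟩, rfl⟩
  calc x ⊓ (1 ⊓ n • a) ≤ x ⊓ (n • a) := inf_le_inf_left x inf_le_right
    _ = 0 := gen_disjoint_nsmul hx ha h n

lemma Lcomp_compl_disj {a : L} (ha : 0 ≤ a) : (1 - Lcomp a) ⊓ a = 0 := by
  set e := Lcomp a with he
  set c := (1 - e) ⊓ a with hc
  have hc0 : 0 ≤ c := le_inf (sub_nonneg.2 (Lcomp_le_one a)) ha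
  have key : ∀ n : ℕ, n • c ≤ 1 := by
    intro n
    induction n with
    | zero => simpa using L_one_nonneg (L := L)
    | succ n ih =>
        have h1 : n • c ≤ e := by
          have h2 : n • c ≤ n • a := nsmul_le_nsmul_right inf_le_right n
          have h3 : n • c ≤ 1 ⊓ n • a := le_inf ih h2
          exact le_trans h3 ((Lcomp_isLUB a).1 ⟨n, rfl⟩)
        have h4 : c ≤ 1 - e := inf_le_left
        rw [succ_nsmul]
        calc n • c + c ≤ e + (1 - e) := add_le_add h1 h4
          _ = 1 := by abel
  exact le_antisymm (L_arch key) hc0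

lemma Lcomp_idem {a : L} (ha : 0 ≤ a) : Lcomp a * Lcomp a = Lcomp a := by
  have h1 : (1 - Lcomp a) ⊓ Lcomp a = 0 :=
    Lcomp_disj ha (sub_nonneg.2 (Lcomp_le_one a)) (Lcomp_compl_disj ha)
  have h2 := L_disjoint_mul_zero (sub_nonneg.2 (Lcomp_le_one a)) (Lcomp_nonneg a) h1
  rw [sub_mul, one_mul, sub_eq_zero] at h2
  exact h2.symm

lemma Lcomp_mul_zero {a b : L} (ha : 0 ≤ a) (hb : 0 ≤ b) (h : a ⊓ b = 0) :
    Lcomp a * b = 0 := by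
  have h1 : b ⊓ Lcomp a = 0 := Lcomp_disj ha hb (by rw [inf_comm]; exact h)
  have := L_disjoint_mul_zero hb (Lcomp_nonneg a) h1
  rw [mul_comm] at this
  exact this

lemma Lcomp_compl_mul {a : L} (ha : 0 ≤ a) : (1 - Lcomp a) * a = 0 :=
  L_disjoint_mul_zero (sub_nonneg.2 (Lcomp_le_one a)) ha (Lcomp_compl_disj ha)

lemma Lcomp_mono {a b : L} (hab : a ≤ b) : Lcomp a ≤ Lcomp b := by
  apply (Lcomp_isLUB a).2
  rintro _ ⟨n, rfl⟩
  calc 1 ⊓ n • a ≤ 1 ⊓ n • b := inf_le_inf_left 1 (nsmul_le_nsmul_right hab n)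
    _ ≤ Lcomp b := (Lcomp_isLUB b).1 ⟨n, rfl⟩

end Lcomp

section Efun
variable {L : Type*} [DFAlgebra L]

noncomputable def Efun (l : L) (lam : ℝ) : L := Lcomp ((l - algebraMap ℝ L lam)⁺)

lemma Efun_idem (l : L) (lam : ℝ) : Efun l lam * Efun l lam = Efun l lam :=
  Lcomp_idem (posPart_nonneg _)

lemma Efun_nonneg (l : L) (lam : ℝ) : 0 ≤ Efun l lam := Lcomp_nonneg _

lemma Efun_le_one (l : L) (lam : ℝ) : Efun l lam ≤ 1 := Lcomp_le_one _

lemma Efun_anti (l : L) {lam mu : ℝ} (h : lam ≤ mu) : Efun l mu ≤ Efun l lam := by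
  apply Lcomp_mono
  apply posPart_mono
  exact sub_le_sub_left (L_algebraMap_mono h) l

lemma Efun_mul_nonneg (l : L) (lam : ℝ) : 0 ≤ Efun l lam * (l - algebraMap ℝ L lam) := by
  set d := l - algebraMap ℝ L lam with hd
  have h1 : Efun l lam * d⁻ = 0 :=
    Lcomp_mul_zero (posPart_nonneg d) (negPart_nonneg d) (posPart_inf_negPart_eq_zero d)
  have h2 : d = d⁺ - d⁻ := (posPart_sub_negPart d).symm
  calc (0:L) ≤ Efun l lam * d⁺ := L_mul_nonneg (Efun_nonneg l lam) (posPart_nonneg d)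
    _ = Efun l lam * d⁺ - Efun l lam * d⁻ := by rw [h1, sub_zero]
    _ = Efun l lam * d := by rw [← mul_sub, ← h2]

lemma Efun_compl_mul_nonpos (l : L) (lam : ℝ) :
    (1 - Efun l lam) * (l - algebraMap ℝ L lam) ≤ 0 := by
  set d := l - algebraMap ℝ L lam with hd
  have h1 : (1 - Efun l lam) * d⁺ = 0 := Lcomp_compl_mul (posPart_nonneg d)
  have h2 : d = d⁺ - d⁻ := (posPart_sub_negPart d).symm
  calc (1 - Efun l lam) * d = (1 - Efun l lam) * d⁺ - (1 - Efun l lam) * d⁻ := by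
        rw [← mul_sub, ← h2]
    _ = -((1 - Efun l lam) * d⁻) := by rw [h1, zero_sub]
    _ ≤ 0 := neg_nonpos.2 (L_mul_nonneg (sub_nonneg.2 (Efun_le_one l lam)) (negPart_nonneg d))

lemma Efun_zero_mul {l : L} (hl : 0 ≤ l) : (1 - Efun l 0) * l = 0 := by
  have h1 : (l - algebraMap ℝ L 0)⁺ = l := by
    rw [map_zero, sub_zero]
    exact posPart_eq_self.2 hl
  have := Lcomp_compl_mul (posPart_nonneg (l - algebraMap ℝ L 0))
  unfold Efun
  rw [h1] at this ⊢
  exact this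

lemma Efun_glb {l : L} (hl : 0 ≤ l) : IsGLB (Set.range fun n : ℕ => Efun l n) 0 := by
  constructor
  · rintro _ ⟨n, rfl⟩; exact Efun_nonneg l n
  · intro c hc
    have hcp : ∀ n : ℕ, n • c⁺ ≤ l := by
      intro n
      have h1 : c⁺ ≤ Efun l n := sup_le (hc ⟨n, rfl⟩) (Efun_nonneg l n)
      have h2 : n • c⁺ ≤ n • Efun l n := nsmul_le_nsmul_right h1 n
      have h3 : (n : L) * Efun l n ≤ Efun l n * l := by
        have h4 := Efun_mul_nonneg l n
        rw [mul_sub, sub_nonneg] at h4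
        calc (n : L) * Efun l n = Efun l n * algebraMap ℝ L (n : ℝ) := by
              rw [map_natCast, mul_comm]
          _ ≤ Efun l n * l := h4
      have h5 : Efun l n * l ≤ l := by
        calc Efun l n * l = l * Efun l n := mul_comm _ _
          _ ≤ l * 1 := L_mul_le_mul (Efun_le_one l n) hl
          _ = l := mul_one l
      calc n • c⁺ ≤ n • Efun l n := h2
        _ = (n : L) * Efun l n := by rw [nsmul_eq_mul]
        _ ≤ l := le_trans h3 h5
    have := L_arch hcp
    exact le_trans (le_posPart c) this

end Efun

section Freud
variable {L : Type*} [DFAlgebra L]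

noncomputable def eF (l : L) (m k : ℕ) : L := Efun l ((k : ℝ) / (m : ℝ))

noncomputable def tF (l : L) (m k : ℕ) : L :=
  eF l m k * (l - algebraMap ℝ L ((k : ℝ) / (m : ℝ)))

noncomputable def cF (m : ℕ) : L := algebraMap ℝ L ((m : ℝ))⁻¹

lemma cF_nonneg (m : ℕ) : (0:L) ≤ cF m :=
  DFAlgebra.algebraMap_nonneg _ (by positivity)

variable {l : L} {m : ℕ}

lemma tF_nonneg (l : L) (m k : ℕ) : 0 ≤ tF l m k := Efun_mul_nonneg l _

lemma eF_idem (l : L) (m k : ℕ) : eF l m k * eF l m k = eF l m k := Efun_idem l _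

lemma eF_nonneg (l : L) (m k : ℕ) : 0 ≤ eF l m k := Efun_nonneg l _

lemma eF_anti (l : L) (hm : 0 < m) (k : ℕ) : eF l m (k+1) ≤ eF l m k := by
  apply Efun_anti
  have hm' : (0:ℝ) < (m:ℝ) := by exact_mod_cast hm
  apply div_le_div_of_nonneg_right ?_ hm'.le
  push_cast; linarith

lemma eF_mul (l : L) (hm : 0 < m) (k : ℕ) :
    eF l m (k+1) * eF l m k = eF l m (k+1) :=
  L_idem_mul_of_le (Efun_idem l _) (Efun_idem l _) (eF_anti l hm k)

lemma cast_step (hm : 0 < m) (k : ℕ) :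
    algebraMap ℝ L (((k+1 : ℕ) : ℝ) / (m : ℝ)) =
      algebraMap ℝ L ((k : ℝ) / (m : ℝ)) + cF m := by
  have hm' : ((m:ℝ)) ≠ 0 := by positivity
  simp only [cF, ← map_add]
  congr 1
  push_cast
  field_simp

lemma T1 (hm : 0 < m) (k : ℕ) :
    tF l m k ≤ cF m * eF l m k + tF l m (k+1) := by
  set A := algebraMap ℝ L ((k : ℝ) / (m : ℝ)) with hA
  set B := algebraMap ℝ L (((k+1:ℕ) : ℝ) / (m : ℝ)) with hB
  have hAB : B = A + cF m := cast_step hm k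
  set e0 := eF l m k
  set e1 := eF l m (k+1)
  have he : e1 * e0 = e1 := eF_mul l hm k
  have iden : tF l m k = (e0 - e1) * (l - A) + tF l m (k+1) + cF m * e1 := by
    show e0 * (l - A) = (e0 - e1) * (l - A) + e1 * (l - B) + cF m * e1
    rw [hAB]; ring
  have hfirst : (e0 - e1) * (l - A) ≤ cF m * e0 - cF m * e1 := by
    have h1 : (e0 - e1) * (l - B) ≤ 0 := by
      have h2 : (e0 - e1) * (l - B) = (e0 - e1) * ((1 - e1) * (l - B)) := by
        have h4 : e1 * e1 = e1 := Efun_idem l _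
        have h3 : (e0 - e1) * (1 - e1) = e0 - e1 := by
          calc (e0 - e1) * (1 - e1) = e0 - e0 * e1 - e1 + e1 * e1 := by ring
            _ = e0 - e1 := by rw [mul_comm e0 e1, he, h4]; ring
        rw [← mul_assoc, h3]
      rw [h2]
      exact L_mul_nonpos (sub_nonneg.2 (eF_anti l hm k)) (Efun_compl_mul_nonpos l _)
    have h5 : (e0 - e1) * (l - A) = (e0 - e1) * (l - B) + (cF m * e0 - cF m * e1) := by
      rw [hAB]; ring
    rw [h5]
    calc (e0 - e1) * (l - B) + (cF m * e0 - cF m * e1)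
        ≤ 0 + (cF m * e0 - cF m * e1) := add_le_add_left h1 _
      _ = cF m * e0 - cF m * e1 := zero_add _
  calc tF l m k = (e0 - e1) * (l - A) + (tF l m (k+1) + cF m * e1) := by rw [iden]; ring
    _ ≤ (cF m * e0 - cF m * e1) + (tF l m (k+1) + cF m * e1) := add_le_add_left hfirst _
    _ = cF m * e0 + tF l m (k+1) := by ring

lemma T2 (hm : 0 < m) (k : ℕ) :
    cF m * eF l m (k+1) + tF l m (k+1) ≤ tF l m k := by
  set A := algebraMap ℝ L ((k : ℝ) / (m : ℝ)) with hA
  set B := algebraMap ℝ L (((k+1:ℕ) : ℝ) / (m : ℝ)) with hB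
  have hAB : B = A + cF m := cast_step hm k
  set e0 := eF l m k
  set e1 := eF l m (k+1)
  have he : e1 * e0 = e1 := eF_mul l hm k
  have iden : tF l m k = (e0 - e1) * (l - A) + tF l m (k+1) + cF m * e1 := by
    show e0 * (l - A) = (e0 - e1) * (l - A) + e1 * (l - B) + cF m * e1
    rw [hAB]; ring
  have hfirst : 0 ≤ (e0 - e1) * (l - A) := by
    have h2 : (e0 - e1) * (l - A) = (e0 - e1) * (e0 * (l - A)) := by
      have h4 : e0 * e0 = e0 := Efun_idem l _
      have h3 : (e0 - e1) * e0 = e0 - e1 := by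
        calc (e0 - e1) * e0 = e0 * e0 - e1 * e0 := by ring
          _ = e0 - e1 := by rw [h4, he]
      rw [← mul_assoc, h3]
    rw [h2]
    exact L_mul_nonneg (sub_nonneg.2 (eF_anti l hm k)) (tF_nonneg l m k)
  calc cF m * e1 + tF l m (k+1) ≤ (e0 - e1) * (l - A) + (cF m * e1 + tF l m (k+1)) := by
        exact le_add_of_nonneg_left hfirst
    _ = tF l m k := by rw [iden]; ring

lemma tF_zero (l : L) (m : ℕ) : tF l m 0 = eF l m 0 * l := by
  simp [tF, eF]

lemma FA (hl : 0 ≤ l) (hm : 0 < m) : ∀ N : ℕ,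
    cF m * (∑ k ∈ Finset.range N, eF l m (k+1)) + tF l m N ≤ l := by
  intro N
  induction N with
  | zero =>
      rw [Finset.sum_range_zero, mul_zero, zero_add, tF_zero]
      calc eF l m 0 * l = l * eF l m 0 := mul_comm _ _
        _ ≤ l * 1 := L_mul_le_mul (Efun_le_one l _) hl
        _ = l := mul_one l
  | succ N ih =>
      rw [Finset.sum_range_succ, mul_add]
      calc cF m * (∑ k ∈ Finset.range N, eF l m (k+1)) + cF m * eF l m (N+1)
            + tF l m (N+1)
          = cF m * (∑ k ∈ Finset.range N, eF l m (k+1))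
            + (cF m * eF l m (N+1) + tF l m (N+1)) := by ring
        _ ≤ cF m * (∑ k ∈ Finset.range N, eF l m (k+1)) + tF l m N :=
            add_le_add_right (T2 hm N) _
        _ ≤ l := ih

lemma FB (hl : 0 ≤ l) (hm : 0 < m) : ∀ N : ℕ,
    l ≤ cF m * (∑ k ∈ Finset.range N, eF l m k) + tF l m N := by
  intro N
  induction N with
  | zero =>
      rw [Finset.sum_range_zero, mul_zero, zero_add, tF_zero]
      have h0 : eF l m 0 = Efun l 0 := by simp [eF]
      have h1 := Efun_zero_mul hl
      rw [sub_mul, one_mul, sub_eq_zero] at h1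
      rw [h0, ← h1]
  | succ N ih =>
      rw [Finset.sum_range_succ, mul_add]
      calc l ≤ cF m * (∑ k ∈ Finset.range N, eF l m k) + tF l m N := ih
        _ ≤ cF m * (∑ k ∈ Finset.range N, eF l m k)
            + (cF m * eF l m N + tF l m (N+1)) := add_le_add_right (T1 hm N) _
        _ = cF m * (∑ k ∈ Finset.range N, eF l m k) + cF m * eF l m N
            + tF l m (N+1) := by ring

/-- The main Freudenthal approximation: for each `n m`, with
`s = cF m * ∑_{k<n*m} eF l m (k+1)` we have `s ≤ l ≤ s + cF m + Efun l n * l`. -/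
lemma L_freud (hl : 0 ≤ l) (hm : 0 < m) (n : ℕ) :
    cF m * (∑ k ∈ Finset.range (n*m), eF l m (k+1)) ≤ l ∧
    l ≤ cF m * (∑ k ∈ Finset.range (n*m), eF l m (k+1)) + cF m
        + Efun l (n : ℝ) * l := by
  set N := n * m with hN
  constructor
  · calc cF m * (∑ k ∈ Finset.range N, eF l m (k+1))
        ≤ cF m * (∑ k ∈ Finset.range N, eF l m (k+1)) + tF l m N :=
          le_add_of_nonneg_right (tF_nonneg l m N)
      _ ≤ l := FA hl hm N
  · have hsum : ∑ k ∈ Finset.range N, eF l m k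
        ≤ 1 + ∑ k ∈ Finset.range N, eF l m (k+1) := by
      cases N with
      | zero =>
          simp only [Finset.sum_range_zero, add_zero]
          exact L_one_nonneg
      | succ N' =>
          rw [Finset.sum_range_succ' (fun k => eF l m k) N']
          have h1 : eF l m 0 ≤ 1 := Efun_le_one l _
          have h2 : (∑ k ∈ Finset.range N', eF l m (k+1))
              ≤ ∑ k ∈ Finset.range (N'+1), eF l m (k+1) := by
            rw [Finset.sum_range_succ]
            exact le_add_of_nonneg_right (Efun_nonneg l _)
          calc (∑ k ∈ Finset.range N', eF l m (k+1)) + eF l m 0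
              ≤ (∑ k ∈ Finset.range (N'+1), eF l m (k+1)) + 1 := add_le_add h2 h1
            _ = 1 + ∑ k ∈ Finset.range (N'+1), eF l m (k+1) := by ring
    have hcast : ((N : ℝ) / (m : ℝ)) = (n : ℝ) := by
      have hm' : ((m:ℝ)) ≠ 0 := by positivity
      rw [hN]; push_cast; field_simp
    have htail : tF l m N ≤ Efun l (n : ℝ) * l := by
      have h3 : eF l m N = Efun l (n : ℝ) := by rw [eF, hcast]
      have h4 : 0 ≤ eF l m N * algebraMap ℝ L ((N:ℝ)/(m:ℝ)) :=
        L_mul_nonneg (Efun_nonneg l _) (DFAlgebra.algebraMap_nonneg _ (by positivity))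
      calc tF l m N = eF l m N * l - eF l m N * algebraMap ℝ L ((N:ℝ)/(m:ℝ)) := by
            rw [tF, mul_sub]
        _ ≤ eF l m N * l := sub_le_self _ h4
        _ = Efun l (n : ℝ) * l := by rw [h3]
    calc l ≤ cF m * (∑ k ∈ Finset.range N, eF l m k) + tF l m N := FB hl hm N
      _ ≤ cF m * (1 + ∑ k ∈ Finset.range N, eF l m (k+1)) + Efun l (n:ℝ) * l := by
          apply add_le_add _ htail
          exact L_mul_le_mul hsum (cF_nonneg m)
      _ = cF m * (∑ k ∈ Finset.range N, eF l m (k+1)) + cF m + Efun l (n:ℝ) * l := by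
          ring

end Freud


/-- A partially ordered `L`-module. -/
class POModule (L : Type*) [DFAlgebra L] (X : Type*) extends
    AddCommGroup X, Module L X, PartialOrder X where
  add_le_add_left : ∀ a b : X, a ≤ b → ∀ c : X, c + a ≤ c + b
  smul_le_smul : ∀ l : L, 0 ≤ l → ∀ a b : X, a ≤ b → l • a ≤ l • b
/-- An L-vector lattice: a PO L-module whose order is a lattice order. -/
class LVectorLattice (L : Type*) [DFAlgebra L] (X : Type*) extends
    AddCommGroup X, Module L X, Lattice X where
  add_le_add_left : ∀ a b : X, a ≤ b → ∀ c : X, c + a ≤ c + b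
  smul_le_smul : ∀ l : L, 0 ≤ l → ∀ a b : X, a ≤ b → l • a ≤ l • b

section Lb

variable (L X Y : Type*) [DFAlgebra L] [POModule L X] [LVectorLattice L Y]

/-- An operator is order-bounded if it maps order intervals into order
intervals. -/
def OrderBounded (S : X →ₗ[L] Y) : Prop :=
  ∀ a b : X, ∃ c d : Y, ∀ z : X, a ≤ z → z ≤ b → c ≤ S z ∧ S z ≤ d

/-- The order-bounded operators from X to Y. -/
abbrev Lb := {S : X →ₗ[L] Y // OrderBounded L X Y S}

/-- L_b(X,Y) is ordered by the cone of positive operators. -/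
instance : Preorder (Lb L X Y) where
  le S T := ∀ x : X, 0 ≤ x → S.1 x ≤ T.1 x
  le_refl S x _ := le_refl _
  le_trans S T U hST hTU x hx := le_trans (hST x hx) (hTU x hx)

instance : Zero (Lb L X Y) :=
  ⟨⟨0, fun _ _ => ⟨0, 0, fun z _ _ => by simp⟩⟩⟩

end Lb

instance (L X : Type*) [DFAlgebra L] [POModule L X] : AddLeftMono X :=
  ⟨fun c a b h => POModule.add_le_add_left a b h c⟩

instance (L Y : Type*) [DFAlgebra L] [LVectorLattice L Y] : AddLeftMono Y :=
  ⟨fun c a b h => LVectorLattice.add_le_add_left a b h c⟩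

section XMod
variable {L X : Type*} [DFAlgebra L] [POModule L X]

lemma X_smul_nonneg {l : L} {x : X} (hl : 0 ≤ l) (hx : 0 ≤ x) : 0 ≤ l • x := by
  have h := POModule.smul_le_smul l hl 0 x hx
  rwa [smul_zero] at h

lemma X_smul_mono {l l' : L} {x : X} (h : l ≤ l') (hx : 0 ≤ x) : l • x ≤ l' • x := by
  have h1 : 0 ≤ (l' - l) • x := X_smul_nonneg (sub_nonneg.2 h) hx
  rw [sub_smul, sub_nonneg] at h1
  exact h1

end XMod

section YMod
variable {L Y : Type*} [DFAlgebra L] [LVectorLattice L Y]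

lemma Y_smul_nonneg {l : L} {y : Y} (hl : 0 ≤ l) (hy : 0 ≤ y) : 0 ≤ l • y := by
  have h := LVectorLattice.smul_le_smul l hl 0 y hy
  rwa [smul_zero] at h

lemma Y_smul_mono {l l' : L} {y : Y} (h : l ≤ l') (hy : 0 ≤ y) : l • y ≤ l' • y := by
  have h1 : 0 ≤ (l' - l) • y := Y_smul_nonneg (sub_nonneg.2 h) hy
  rw [sub_smul, sub_nonneg] at h1
  exact h1

lemma Y_smul_le {l : L} {y y' : Y} (hl : 0 ≤ l) (h : y ≤ y') : l • y ≤ l • y' :=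
  LVectorLattice.smul_le_smul l hl y y' h

lemma gen_arch {Y' : Type*} [Lattice Y'] [AddCommGroup Y'] [AddLeftMono Y']
    (hded : ∀ S : Set Y', S.Nonempty → BddAbove S → ∃ a : Y', IsLUB S a)
    {a b : Y'} (h : ∀ n : ℕ, n • a ≤ b) : a ≤ 0 := by
  obtain ⟨u, hu⟩ := hded (Set.range fun n : ℕ => n • a)
    ⟨0 • a, ⟨0, rfl⟩⟩ ⟨b, by rintro _ ⟨n, rfl⟩; exact h n⟩
  have h2 : u ≤ u - a := by
    apply hu.2
    rintro _ ⟨n, rfl⟩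
    rw [le_sub_iff_add_le]
    have h3 : n • a + a = (n + 1) • a := by rw [succ_nsmul]
    rw [h3]
    exact hu.1 ⟨n + 1, rfl⟩
  rw [le_sub_iff_add_le] at h2
  exact (add_le_iff_nonpos_right u).mp h2

lemma gen_nsmul_cancel {Y' : Type*} [Lattice Y'] [AddCommGroup Y'] [AddLeftMono Y']
    {u v : Y'} {n : ℕ} (hn : 0 < n) (h : n • u = n • v) : u = v := by
  have h1 : v ≤ u := by
    have := gen_nsmul_nonneg_cancel hn (a := u - v) (by rw [smul_sub, h, sub_self])
    exact sub_nonneg.mp this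
  have h2 : u ≤ v := by
    have := gen_nsmul_nonneg_cancel hn (a := v - u) (by rw [smul_sub, h, sub_self])
    exact sub_nonneg.mp this
  exact le_antisymm h2 h1

end YMod


open Pointwise

/-- Riesz–Kantorovich: existence of S⁺ = S ∨ 0 in L_b(X,Y) together with the
formula S⁺(x) = sup { S y : 0 ≤ y ≤ x }. -/
theorem stmt15 (L X Y : Type*) [DFAlgebra L] [POModule L X] [LVectorLattice L Y]
    (hXdir : ∀ x : X, ∃ a b : X, 0 ≤ a ∧ 0 ≤ b ∧ x = a - b)
    (hRDP : ∀ x y : X, 0 ≤ x → 0 ≤ y →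
      Set.Icc (0 : X) (x + y) = Set.Icc (0 : X) x + Set.Icc (0 : X) y)
    (hYded : ∀ S : Set Y, S.Nonempty → BddAbove S → ∃ a : Y, IsLUB S a)
    (hYParch : ∀ π : ℕ → L, (∀ n, π n * π n = π n) → Antitone π →
      IsGLB (Set.range π) 0 → ∀ y : Y, 0 ≤ y → IsGLB (Set.range fun n => π n • y) 0)
    (S : X →ₗ[L] Y) (hS : OrderBounded L X Y S) :
    ∃ R : Lb L X Y, IsLUB {(⟨S, hS⟩ : Lb L X Y), 0} R ∧
      ∀ x : X, 0 ≤ x → IsLUB (S '' Set.Icc (0 : X) x) (R.1 x) := by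
  classical
  have hS0 : S 0 = 0 := map_zero S
  -- existence of suprema of S-images of order intervals
  have hex : ∀ x : X, ∃ y : Y, 0 ≤ x → IsLUB (S '' Set.Icc 0 x) y := by
    intro x
    by_cases hx : 0 ≤ x
    · obtain ⟨c, d, hcd⟩ := hS 0 x
      obtain ⟨y, hy⟩ := hYded (S '' Set.Icc 0 x) ⟨S 0, ⟨0, ⟨le_rfl, hx⟩, rfl⟩⟩
        ⟨d, by rintro _ ⟨z, hz, rfl⟩; exact (hcd z hz.1 hz.2).2⟩
      exact ⟨y, fun _ => hy⟩
    · exact ⟨0, fun h => absurd h hx⟩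
  choose p hp using hex
  have hmem0 : ∀ x : X, 0 ≤ x → (0 : Y) ∈ S '' Set.Icc (0:X) x := by
    intro x hx
    exact ⟨0, ⟨le_rfl, hx⟩, hS0⟩
  have pnn : ∀ x : X, 0 ≤ x → 0 ≤ p x := by
    intro x hx
    exact (hp x hx).1 (hmem0 x hx)
  have p0 : p 0 = 0 := by
    have h1 : S '' Set.Icc (0:X) 0 = {0} := by
      rw [Set.Icc_self]; simp [hS0]
    exact (h1 ▸ hp 0 le_rfl).unique isLUB_singleton
  -- additivity on the positive cone
  have padd : ∀ x y : X, 0 ≤ x → 0 ≤ y → p (x + y) = p x + p y := by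
    intro x y hx hy
    have hset : S '' Set.Icc (0:X) (x+y) = S '' Set.Icc (0:X) x + S '' Set.Icc (0:X) y := by
      rw [hRDP x y hx hy]
      ext u
      constructor
      · rintro ⟨z, ⟨za, hza, zb, hzb, rfl⟩, rfl⟩
        exact ⟨S za, ⟨za, hza, rfl⟩, S zb, ⟨zb, hzb, rfl⟩, (map_add S za zb).symm⟩
      · rintro ⟨_, ⟨za, hza, rfl⟩, _, ⟨zb, hzb, rfl⟩, rfl⟩
        exact ⟨za + zb, ⟨za, hza, zb, hzb, rfl⟩, map_add S za zb⟩
    have h1 : IsLUB (S '' Set.Icc (0:X) x + S '' Set.Icc (0:X) y) (p x + p y) :=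
      gen_isLUB_add ⟨0, hmem0 y hy⟩ (hp x hx) (hp y hy)
    exact (hset ▸ hp (x+y) (add_nonneg hx hy)).unique h1
  have pmono : ∀ x y : X, 0 ≤ x → x ≤ y → p x ≤ p y := by
    intro x y hx hxy
    have h1 : y = x + (y - x) := by abel
    calc p x ≤ p x + p (y - x) := le_add_of_nonneg_right (pnn _ (sub_nonneg.2 hxy))
      _ = p y := by rw [← padd x (y-x) hx (sub_nonneg.2 hxy), ← h1]
  have pnsmul : ∀ (n : ℕ) (x : X), 0 ≤ x → p (n • x) = n • p x := by
    intro n x hx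
    induction n with
    | zero => simpa using p0
    | succ n ih =>
        rw [succ_nsmul, succ_nsmul, padd _ _ (nsmul_nonneg hx n) hx, ih]
  -- idempotent homogeneity
  have pidem : ∀ (q : L), q * q = q → ∀ x : X, 0 ≤ x → p (q • x) = q • p x := by
    intro q hq x hx
    have hq0 : 0 ≤ q := L_idem_nonneg hq
    have hq1 : q ≤ 1 := L_idem_le_one hq
    have hqx : 0 ≤ q • x := X_smul_nonneg hq0 hx
    have hsub : q • x ≤ x := by
      have h := X_smul_mono hq1 hx
      rwa [one_smul] at h
    have hIcc : Set.Icc (0:X) (q • x) = (fun y => q • y) '' Set.Icc (0:X) x := by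
      ext y
      constructor
      · intro hy
        refine ⟨y, ⟨hy.1, le_trans hy.2 hsub⟩, ?_⟩
        have h1 : (1 - q) • y ≤ (1 - q) • (q • x) :=
          POModule.smul_le_smul _ (sub_nonneg.2 hq1) _ _ hy.2
        have h2 : (1 - q) • (q • x) = 0 := by
          rw [smul_smul]
          have h3 : (1 - q) * q = 0 := by
            have : (1 - q) * q = q - q * q := by ring
            rw [this, hq, sub_self]
          rw [h3, zero_smul]
        have h3 : 0 ≤ (1 - q) • y := X_smul_nonneg (sub_nonneg.2 hq1) hy.1
        have h4 : (1 - q) • y = 0 := le_antisymm (h2 ▸ h1) h3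
        rw [sub_smul, one_smul, sub_eq_zero] at h4
        exact h4.symm
      · rintro ⟨z, hz, rfl⟩
        exact ⟨X_smul_nonneg hq0 hz.1, POModule.smul_le_smul q hq0 _ _ hz.2⟩
    have himg : S '' Set.Icc (0:X) (q • x) = (fun t => q • t) '' (S '' Set.Icc (0:X) x) := by
      rw [hIcc, ← Set.image_comp, ← Set.image_comp]
      congr 1
      ext z
      simp [Function.comp, map_smul]
    apply le_antisymm
    · apply (hp _ hqx).2
      rw [himg]
      rintro _ ⟨u, hu, rfl⟩
      exact Y_smul_le hq0 ((hp x hx).1 hu)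
    · have hub : p x ≤ p (q • x) + (1 - q) • p x := by
        apply (hp x hx).2
        intro u hu
        have h5 : u = q • u + (1 - q) • u := by
          rw [sub_smul, one_smul]; abel
        rw [h5]
        apply add_le_add
        · apply (hp _ hqx).1
          rw [himg]
          exact ⟨u, hu, rfl⟩
        · exact Y_smul_le (sub_nonneg.2 hq1) ((hp x hx).1 hu)
      have h6 : q • p x = p x - (1 - q) • p x := by
        rw [sub_smul, one_smul]; abel
      rw [h6, sub_le_iff_le_add]
      exact hub
  -- (1/m)-homogeneity
  have hcF1 : ∀ m : ℕ, 0 < m → ((m : L)) * cF m = 1 := by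
    intro m hm
    have hm' : ((m:ℝ)) ≠ 0 := by positivity
    rw [cF, ← map_natCast (algebraMap ℝ L) m, ← map_mul]
    rw [mul_inv_cancel₀ hm', map_one]
  have pdiv : ∀ (m : ℕ), 0 < m → ∀ x : X, 0 ≤ x → p ((cF m : L) • x) = (cF m : L) • p x := by
    intro m hm x hx
    have hcm : (0:L) ≤ cF m := cF_nonneg m
    have hz : 0 ≤ (cF m : L) • x := X_smul_nonneg hcm hx
    have hms : m • ((cF m : L) • x) = x := by
      rw [← Nat.cast_smul_eq_nsmul L m, smul_smul, hcF1 m hm, one_smul]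
    have h1 : m • p ((cF m : L) • x) = p x := by
      rw [← pnsmul m _ hz, hms]
    have h2 : m • ((cF m : L) • p x) = p x := by
      rw [← Nat.cast_smul_eq_nsmul L m, smul_smul, hcF1 m hm, one_smul]
    exact gen_nsmul_cancel hm (by rw [h1, h2])
  -- homogeneity for the Freudenthal partial sums
  have psum : ∀ (lq : L) (m : ℕ), 0 < m → ∀ (N : ℕ) (x : X), 0 ≤ x →
      p ((cF m * ∑ k ∈ Finset.range N, eF lq m (k+1)) • x)
        = (cF m * ∑ k ∈ Finset.range N, eF lq m (k+1)) • p x := by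
    intro lq m hm N x hx
    induction N with
    | zero => simp [p0]
    | succ N ih =>
        have hterm : p ((cF m * eF lq m (N+1)) • x) = (cF m * eF lq m (N+1)) • p x := by
          rw [mul_smul, pdiv m hm _ (X_smul_nonneg (L_idem_nonneg (eF_idem lq m (N+1))) hx),
            pidem _ (eF_idem lq m (N+1)) x hx, ← mul_smul]
        have hcN : (0:L) ≤ cF m * ∑ k ∈ Finset.range N, eF lq m (k+1) :=
          L_mul_nonneg (cF_nonneg m) (L_sum_nonneg fun k _ => eF_nonneg lq m (k+1))
        have hterm0 : (0:L) ≤ cF m * eF lq m (N+1) :=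
          L_mul_nonneg (cF_nonneg m) (Efun_nonneg lq _)
        rw [Finset.sum_range_succ, mul_add, add_smul, add_smul,
          padd _ _ (X_smul_nonneg hcN hx) (X_smul_nonneg hterm0 hx), ih, hterm]
  -- the key scalar homogeneity on the positive cone
  have KEY : ∀ (lq : L), 0 ≤ lq → ∀ x : X, 0 ≤ x → p (lq • x) = lq • p x := by
    intro lq hl x hx
    have hlx : 0 ≤ lq • x := X_smul_nonneg hl hx
    have hpx : 0 ≤ p x := pnn x hx
    have hplx : 0 ≤ p (lq • x) := pnn _ hlx
    have hlpx : 0 ≤ lq • p x := Y_smul_nonneg hl hpx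
    set π : ℕ → L := fun n => Efun lq (n : ℝ) with hπ
    have hπidem : ∀ n, π n * π n = π n := fun n => Efun_idem lq _
    have hπanti : Antitone π := fun a b hab => Efun_anti lq (by exact_mod_cast hab)
    have hπglb : IsGLB (Set.range π) 0 := Efun_glb hl
    have main : ∀ n : ℕ,
        (p (lq • x) - lq • p x ≤ π n • p (lq • x)) ∧
        (lq • p x - p (lq • x) ≤ π n • (lq • p x)) := by
      intro n
      have harch1 : ∀ m : ℕ, m • (p (lq • x) - lq • p x - π n • p (lq • x)) ≤ p x ∧
          m • (lq • p x - p (lq • x) - π n • (lq • p x)) ≤ p x := by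
        intro m
        rcases Nat.eq_zero_or_pos m with rfl | hm
        · constructor <;> simpa using hpx
        obtain ⟨hFA, hFB⟩ := L_freud hl hm n
        set s := cF m * ∑ k ∈ Finset.range (n*m), eF lq m (k+1) with hs
        have hs0 : (0:L) ≤ s :=
          L_mul_nonneg (cF_nonneg m) (L_sum_nonneg fun k _ => eF_nonneg lq m (k+1))
        have hπn0 : 0 ≤ π n := L_idem_nonneg (hπidem n)
        have hπl0 : 0 ≤ π n * lq := L_mul_nonneg hπn0 hl
        have hpsx : p (s • x) = s • p x := psum lq m hm (n*m) x hx
        have hb4 : ∀ u : Y, m • ((cF m : L) • u) = u := by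
          intro u
          rw [← Nat.cast_smul_eq_nsmul L m, smul_smul, hcF1 m hm, one_smul]
        constructor
        · -- direction 1
          have hb1 : p (lq • x) ≤ s • p x + (cF m : L) • p x + π n • p (lq • x) := by
            have h1 : lq • x ≤ (s + cF m + π n * lq) • x := X_smul_mono hFB hx
            have h2 : p (lq • x) ≤ p ((s + cF m + π n * lq) • x) := pmono _ _ hlx h1
            have h3 : ((s + cF m + π n * lq) : L) • x
                = (s • x + (cF m : L) • x) + (π n * lq) • x := by
              rw [add_smul, add_smul]
            have h4 : p ((s + cF m + π n * lq) • x)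
                = p (s • x) + p ((cF m : L) • x) + p ((π n * lq) • x) := by
              rw [h3, padd _ _ (add_nonneg (X_smul_nonneg hs0 hx)
                  (X_smul_nonneg (cF_nonneg m) hx)) (X_smul_nonneg hπl0 hx),
                padd _ _ (X_smul_nonneg hs0 hx) (X_smul_nonneg (cF_nonneg m) hx)]
            have h6 : p ((cF m : L) • x) = (cF m : L) • p x := pdiv m hm x hx
            have h7 : p ((π n * lq) • x) = π n • p (lq • x) := by
              rw [mul_smul, pidem _ (hπidem n) _ hlx]
            calc p (lq • x) ≤ p ((s + cF m + π n * lq) • x) := h2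
              _ = s • p x + (cF m : L) • p x + π n • p (lq • x) := by rw [h4, hpsx, h6, h7]
          have hb2 : s • p x ≤ lq • p x := Y_smul_mono hFA hpx
          have hb3 : p (lq • x) - lq • p x - π n • p (lq • x) ≤ (cF m : L) • p x := by
            rw [sub_le_iff_le_add, sub_le_iff_le_add]
            calc p (lq • x) ≤ s • p x + (cF m : L) • p x + π n • p (lq • x) := hb1
              _ ≤ lq • p x + (cF m : L) • p x + π n • p (lq • x) := by
                  apply add_le_add_left; exact add_le_add_left hb2 _
              _ = (cF m : L) • p x + π n • p (lq • x) + lq • p x := by abel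
          calc m • (p (lq • x) - lq • p x - π n • p (lq • x)) ≤ m • ((cF m : L) • p x) :=
                nsmul_le_nsmul_right hb3 m
            _ = p x := hb4 _
        · -- direction 2
          have hb1 : lq • p x ≤ p (lq • x) + (cF m : L) • p x + π n • (lq • p x) := by
            have h1 : lq • p x ≤ (s + cF m + π n * lq) • p x := Y_smul_mono hFB hpx
            have h2 : ((s + cF m + π n * lq) : L) • p x
                = s • p x + (cF m : L) • p x + (π n * lq) • p x := by
              rw [add_smul, add_smul]
            have h5 : s • p x ≤ p (lq • x) := by
              rw [← hpsx]
              exact pmono _ _ (X_smul_nonneg hs0 hx) (X_smul_mono hFA hx)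
            have h7 : (π n * lq) • p x = π n • (lq • p x) := mul_smul _ _ _
            calc lq • p x ≤ (s + cF m + π n * lq) • p x := h1
              _ = s • p x + (cF m : L) • p x + π n • (lq • p x) := by rw [h2, h7]
              _ ≤ p (lq • x) + (cF m : L) • p x + π n • (lq • p x) := by
                  apply add_le_add_left; exact add_le_add_left h5 _
          have hb3 : lq • p x - p (lq • x) - π n • (lq • p x) ≤ (cF m : L) • p x := by
            rw [sub_le_iff_le_add, sub_le_iff_le_add]
            calc lq • p x ≤ p (lq • x) + (cF m : L) • p x + π n • (lq • p x) := hb1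
              _ = (cF m : L) • p x + π n • (lq • p x) + p (lq • x) := by abel
          calc m • (lq • p x - p (lq • x) - π n • (lq • p x)) ≤ m • ((cF m : L) • p x) :=
                nsmul_le_nsmul_right hb3 m
            _ = p x := hb4 _
      constructor
      · have h := gen_arch hYded (fun m => (harch1 m).1)
        rwa [sub_nonpos] at h
      · have h := gen_arch hYded (fun m => (harch1 m).2)
        rwa [sub_nonpos] at h
    have hglb1 := hYParch π hπidem hπanti hπglb (p (lq • x)) hplx
    have hglb2 := hYParch π hπidem hπanti hπglb (lq • p x) hlpx
    have hle1 : p (lq • x) - lq • p x ≤ 0 :=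
      hglb1.2 (by rintro _ ⟨n, rfl⟩; exact (main n).1)
    have hle2 : lq • p x - p (lq • x) ≤ 0 :=
      hglb2.2 (by rintro _ ⟨n, rfl⟩; exact (main n).2)
    exact le_antisymm (sub_nonpos.mp hle1) (sub_nonpos.mp hle2)
  -- construct the operator R
  choose A B hA hB hAB using hXdir
  set Rf : X → Y := fun x => p (A x) - p (B x) with hRfdef
  have pwd : ∀ a b a' b' : X, 0 ≤ a → 0 ≤ b → 0 ≤ a' → 0 ≤ b' → a - b = a' - b' →
      p a - p b = p a' - p b' := by
    intro a b a' b' ha hb ha' hb' h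
    rw [sub_eq_sub_iff_add_eq_add] at h ⊢
    rw [← padd _ _ ha hb', ← padd _ _ ha' hb, h]
  have hRfeq : ∀ (x a b : X), 0 ≤ a → 0 ≤ b → x = a - b → Rf x = p a - p b := by
    intro x a b ha hb h
    exact pwd (A x) (B x) a b (hA x) (hB x) ha hb (by rw [← hAB x, h])
  have hRfpos : ∀ x : X, 0 ≤ x → Rf x = p x := by
    intro x hx
    rw [hRfeq x x 0 hx le_rfl (by abel), p0, sub_zero]
  have hRfadd : ∀ x y : X, Rf (x + y) = Rf x + Rf y := by
    intro x y
    have e1 : x = A x - B x := hAB x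
    have e2 : y = A y - B y := hAB y
    have h1 : x + y = (A x + A y) - (B x + B y) := by
      conv_lhs => rw [e1, e2]
      abel
    rw [hRfeq (x+y) _ _ (add_nonneg (hA x) (hA y)) (add_nonneg (hB x) (hB y)) h1,
      padd _ _ (hA x) (hA y), padd _ _ (hB x) (hB y)]
    show _ = (p (A x) - p (B x)) + (p (A y) - p (B y))
    abel
  have hRfsmul : ∀ (l : L) (x : X), Rf (l • x) = l • Rf x := by
    intro l x
    have e1 : x = A x - B x := hAB x
    have hlpn : l = l⁺ - l⁻ := (posPart_sub_negPart l).symm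
    have hlp : (0:L) ≤ l⁺ := posPart_nonneg l
    have hln : (0:L) ≤ l⁻ := negPart_nonneg l
    have h1 : l • x = (l⁺ • A x + l⁻ • B x) - (l⁺ • B x + l⁻ • A x) := by
      conv_lhs => rw [e1, hlpn]
      rw [sub_smul, smul_sub, smul_sub]
      abel
    rw [hRfeq (l • x) _ _
        (add_nonneg (X_smul_nonneg hlp (hA x)) (X_smul_nonneg hln (hB x)))
        (add_nonneg (X_smul_nonneg hlp (hB x)) (X_smul_nonneg hln (hA x))) h1,
      padd _ _ (X_smul_nonneg hlp (hA x)) (X_smul_nonneg hln (hB x)),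
      padd _ _ (X_smul_nonneg hlp (hB x)) (X_smul_nonneg hln (hA x)),
      KEY _ hlp _ (hA x), KEY _ hln _ (hB x), KEY _ hlp _ (hB x), KEY _ hln _ (hA x)]
    show _ = l • (p (A x) - p (B x))
    conv_rhs => rw [hlpn]
    rw [sub_smul, smul_sub, smul_sub]
    abel
  set R : X →ₗ[L] Y :=
    { toFun := Rf, map_add' := hRfadd,
      map_smul' := fun l x => by simpa using hRfsmul l x } with hRdef
  have hRapp : ∀ x : X, R x = Rf x := fun x => rfl
  have hRmono : ∀ x y : X, x ≤ y → Rf x ≤ Rf y := by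
    intro x y h
    have h1 : Rf y = Rf x + Rf (y - x) := by
      rw [← hRfadd]; congr 1; abel
    rw [h1, hRfpos _ (sub_nonneg.2 h)]
    exact le_add_of_nonneg_right (pnn _ (sub_nonneg.2 h))
  have hRob : OrderBounded L X Y R := by
    intro a b
    exact ⟨Rf a, Rf b, fun z h1 h2 => ⟨by rw [hRapp]; exact hRmono _ _ h1,
      by rw [hRapp]; exact hRmono _ _ h2⟩⟩
  refine ⟨⟨R, hRob⟩, ⟨?_, ?_⟩, ?_⟩
  · -- upper bound
    rintro T hT
    rcases hT with hT | hT
    · subst hT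
      intro x hx
      rw [hRapp, hRfpos x hx]
      exact (hp x hx).1 ⟨x, ⟨hx, le_rfl⟩, rfl⟩
    · rw [Set.mem_singleton_iff] at hT
      subst hT
      intro x hx
      rw [hRapp, hRfpos x hx]
      exact pnn x hx
  · -- least upper bound
    intro T hT
    have h1 : (⟨S, hS⟩ : Lb L X Y) ≤ T := hT (Set.mem_insert _ _)
    have h2 : (0 : Lb L X Y) ≤ T := hT (Set.mem_insert_of_mem _ rfl)
    intro x hx
    rw [hRapp, hRfpos x hx]
    apply (hp x hx).2
    rintro _ ⟨y, hy, rfl⟩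
    have h3 : S y ≤ T.1 y := h1 y hy.1
    have h4 : T.1 y ≤ T.1 x := by
      have h5 := h2 (x - y) (sub_nonneg.2 hy.2)
      have h6 : (0 : Lb L X Y).1 (x - y) = 0 := rfl
      rw [h6, map_sub] at h5
      exact sub_nonneg.mp h5
    exact le_trans h3 h4
  · intro x hx
    have h7 : (⟨R, hRob⟩ : Lb L X Y).1 x = p x := by
      rw [hRapp, hRfpos x hx]  -- may need show
    rw [h7]
    exact hp x hx
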